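/- Suppose P : [0,T] → ℝ^{n×n} is a symmetric C¹ solution of Ṗ + PA + AᵀP + Q - P B R^{-1} Bᵀ P = 0 with P(T) = H, Q ⪰ 0, H ⪰ 0, R ≻ 0. Then P(t) ⪰ 0 for all t ∈ [0,T]. -/

import Mathlib

set_option maxHeartbeats 1000000

open Matrix Set

private lemma riccati_coord_abs_le_one (n : ℕ) (w : EuclideanSpace ℝ (Fin n)) (hw : ‖w‖ = 1)
    (i : Fin n) : |w i| ≤ 1 := by
  have h : |w i| ≤ ‖w‖ := by
    rw [EuclideanSpace.norm_eq, ← Real.sqrt_sq_eq_abs]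
    apply Real.sqrt_le_sqrt
    have h1 : w i ^ 2 ≤ ∑ j, w j ^ 2 :=
      Finset.single_le_sum (f := fun j => w j ^ 2) (fun j _ => sq_nonneg _) (Finset.mem_univ i)
    have h2 : ∑ j, w j ^ 2 = ∑ j, ‖w j‖ ^ 2 := by simp [Real.norm_eq_abs, sq_abs]
    linarith
  rw [hw] at h; exact h

private lemma riccati_quad_expand (n : ℕ) (M : Matrix (Fin n) (Fin n) ℝ) (w : Fin n → ℝ) :
    w ⬝ᵥ M *ᵥ w = ∑ i, ∑ j, w i * M i j * w j := by
  simp [dotProduct, Matrix.mulVec, Finset.mul_sum, mul_assoc]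

private lemma riccati_quad_abs_le (n : ℕ) (M : Matrix (Fin n) (Fin n) ℝ)
    (w : EuclideanSpace ℝ (Fin n)) (hw : ‖w‖ = 1) :
    |(w : Fin n → ℝ) ⬝ᵥ M *ᵥ w| ≤ ∑ i, ∑ j, |M i j| := by
  rw [riccati_quad_expand]
  have step : ∀ i j : Fin n, |w i * M i j * w j| ≤ |M i j| := by
    intro i j
    have h1 := riccati_coord_abs_le_one n w hw i
    have h2 := riccati_coord_abs_le_one n w hw j
    have e : |w i * M i j * w j| = |w i| * |M i j| * |w j| := by rw [abs_mul, abs_mul]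
    rw [e]
    calc |w i| * |M i j| * |w j| ≤ 1 * |M i j| * 1 := by
          apply mul_le_mul (mul_le_mul h1 le_rfl (abs_nonneg _) zero_le_one) h2 (abs_nonneg _)
          positivity
      _ = |M i j| := by ring
  calc |∑ i, ∑ j, w i * M i j * w j| ≤ ∑ i, |∑ j, w i * M i j * w j| :=
        Finset.abs_sum_le_sum_abs _ _
    _ ≤ ∑ i, ∑ j, |w i * M i j * w j| :=
        Finset.sum_le_sum fun i _ => Finset.abs_sum_le_sum_abs _ _
    _ ≤ ∑ i, ∑ j, |M i j| :=
        Finset.sum_le_sum fun i _ => Finset.sum_le_sum fun j _ => step i j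

private lemma riccati_quad_deriv {n : ℕ} {P P' : ℝ → Matrix (Fin n) (Fin n) ℝ} {x : ℝ}
    (h : ∀ i j, HasDerivAt (fun s => P s i j) (P' x i j) x) (w : Fin n → ℝ) :
    HasDerivAt (fun s => w ⬝ᵥ P s *ᵥ w) (w ⬝ᵥ P' x *ᵥ w) x := by
  simp only [riccati_quad_expand]
  apply HasDerivAt.fun_sum
  intro i _
  apply HasDerivAt.fun_sum
  intro j _
  exact ((h i j).const_mul (w i)).mul_const (w j)

private lemma riccati_eig_quad {n m : ℕ} {Px A : Matrix (Fin n) (Fin n) ℝ}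
    {B : Matrix (Fin n) (Fin m) ℝ} {Rinv : Matrix (Fin m) (Fin m) ℝ} {v : Fin n → ℝ} {g : ℝ}
    (hs : Pxᵀ = Px) (he : Px *ᵥ v = g • v) :
    v ⬝ᵥ (Px * A) *ᵥ v = g * (v ⬝ᵥ A *ᵥ v) ∧
    v ⬝ᵥ (Aᵀ * Px) *ᵥ v = g * (v ⬝ᵥ A *ᵥ v) ∧
    v ⬝ᵥ (Px * B * Rinv * Bᵀ * Px) *ᵥ v = g ^ 2 * (v ⬝ᵥ (B * Rinv * Bᵀ) *ᵥ v) := by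
  have hv : v ᵥ* Px = g • v := by
    rw [← Matrix.mulVec_transpose, hs, he]
  refine ⟨?_, ?_, ?_⟩
  · rw [← Matrix.mulVec_mulVec, Matrix.dotProduct_mulVec, hv, smul_dotProduct]
    rfl
  · rw [← Matrix.mulVec_mulVec, he, Matrix.mulVec_smul, dotProduct_smul,
      Matrix.dotProduct_mulVec, Matrix.vecMul_transpose, dotProduct_comm]
    rfl
  · have assoc : Px * B * Rinv * Bᵀ * Px = Px * (B * Rinv * Bᵀ) * Px := by
      simp [Matrix.mul_assoc]
    rw [assoc, ← Matrix.mulVec_mulVec, ← Matrix.mulVec_mulVec, he, Matrix.mulVec_smul,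
      Matrix.mulVec_smul, dotProduct_smul, Matrix.dotProduct_mulVec, hv,
      smul_dotProduct, smul_eq_mul, smul_eq_mul]
    rw [Matrix.dotProduct_mulVec]
    ring

private lemma riccati_S_nonneg {n m : ℕ} (B : Matrix (Fin n) (Fin m) ℝ)
    (R : Matrix (Fin m) (Fin m) ℝ) (hR : R.PosDef) (v : Fin n → ℝ) :
    0 ≤ v ⬝ᵥ (B * R⁻¹ * Bᵀ) *ᵥ v := by
  have hRi : (R⁻¹).PosSemidef := hR.inv.posSemidef
  have h := hRi.dotProduct_mulVec_nonneg (Bᵀ *ᵥ v)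
  simp only [star_trivial] at h
  rw [Matrix.dotProduct_mulVec] at h
  calc (0 : ℝ) ≤ (Bᵀ *ᵥ v) ᵥ* R⁻¹ ⬝ᵥ Bᵀ *ᵥ v := h
    _ = v ⬝ᵥ (B * R⁻¹ * Bᵀ) *ᵥ v := by
        rw [← Matrix.dotProduct_mulVec, show B * R⁻¹ * Bᵀ = B * (R⁻¹ * Bᵀ) from by
          rw [Matrix.mul_assoc], ← Matrix.mulVec_mulVec, ← Matrix.mulVec_mulVec,
          Matrix.dotProduct_mulVec v, ← Matrix.mulVec_transpose (A := B)]

private lemma riccati_min_eig {n : ℕ} (M : Matrix (Fin n) (Fin n) ℝ) (hs : Mᵀ = M)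
    (v : EuclideanSpace ℝ (Fin n)) (hv : ‖v‖ = 1)
    (hmin : ∀ w : EuclideanSpace ℝ (Fin n), ‖w‖ = 1 →
      (v : Fin n → ℝ) ⬝ᵥ M *ᵥ v ≤ (w : Fin n → ℝ) ⬝ᵥ M *ᵥ w) :
    M *ᵥ (v : Fin n → ℝ) = ((v : Fin n → ℝ) ⬝ᵥ M *ᵥ v) • (v : Fin n → ℝ) := by
  set T : EuclideanSpace ℝ (Fin n) →L[ℝ] EuclideanSpace ℝ (Fin n) :=
    LinearMap.toContinuousLinearMap (Matrix.toEuclideanLin M) with hT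
  have hherm : M.IsHermitian := by
    rwa [Matrix.IsHermitian, Matrix.conjTranspose_eq_transpose_of_trivial]
  have hsa : IsSelfAdjoint T := by
    rw [ContinuousLinearMap.isSelfAdjoint_iff_isSymmetric]
    have := Matrix.isHermitian_iff_isSymmetric.mp hherm
    simpa [hT] using this
  have hre : ∀ w : EuclideanSpace ℝ (Fin n),
      T.reApplyInnerSelf w = (w : Fin n → ℝ) ⬝ᵥ M *ᵥ w := by
    intro w
    simp only [ContinuousLinearMap.reApplyInnerSelf, PiLp.inner_apply, RCLike.inner_apply,
      hT, LinearMap.coe_toContinuousLinearMap', Matrix.toEuclideanLin_apply, map_sum]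
    simp [dotProduct, Matrix.mulVec, Finset.mul_sum, mul_comm]
  have hextr : IsLocalExtrOn T.reApplyInnerSelf
      (Metric.sphere (0 : EuclideanSpace ℝ (Fin n)) ‖v‖) v := by
    apply Or.inl
    apply IsMinOn.localize
    intro w hw
    have hw1 : ‖w‖ = 1 := by simpa [hv] using hw
    simp only [Set.mem_setOf_eq, hre]
    exact hmin w hw1
  have key := hsa.eq_smul_self_of_isLocalExtrOn_real hextr
  have hray : T.rayleighQuotient v = (v : Fin n → ℝ) ⬝ᵥ M *ᵥ v := by
    simp [ContinuousLinearMap.rayleighQuotient, hre, hv]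
  rw [hray] at key
  have := congrArg (WithLp.equiv 2 (Fin n → ℝ)) key
  simpa [hT, Matrix.toEuclideanLin_apply] using this

private lemma riccati_exists_min {n : ℕ} (hn : 0 < n) (M : Matrix (Fin n) (Fin n) ℝ) :
    ∃ v : EuclideanSpace ℝ (Fin n), ‖v‖ = 1 ∧ ∀ w : EuclideanSpace ℝ (Fin n), ‖w‖ = 1 →
      (v : Fin n → ℝ) ⬝ᵥ M *ᵥ v ≤ (w : Fin n → ℝ) ⬝ᵥ M *ᵥ w := by
  have hcontq : Continuous fun w : EuclideanSpace ℝ (Fin n) => (w : Fin n → ℝ) ⬝ᵥ M *ᵥ w := by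
    simp only [riccati_quad_expand]
    apply continuous_finset_sum
    intro i _
    apply continuous_finset_sum
    intro j _
    exact (((EuclideanSpace.proj i).continuous).mul continuous_const).mul
      (EuclideanSpace.proj j).continuous
  have hne : (Metric.sphere (0 : EuclideanSpace ℝ (Fin n)) 1).Nonempty := by
    refine ⟨EuclideanSpace.single ⟨0, hn⟩ 1, ?_⟩
    simp [mem_sphere_iff_norm, EuclideanSpace.norm_single]
  obtain ⟨v, hv, hmin⟩ := (isCompact_sphere (0 : EuclideanSpace ℝ (Fin n)) 1).exists_isMinOn hne
    hcontq.continuousOn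
  refine ⟨v, by simpa [mem_sphere_iff_norm] using hv, fun w hw => ?_⟩
  exact hmin (by simp [mem_sphere_iff_norm, hw])

/-- a symmetric C¹ solution of the Riccati equation with
`Q ⪰ 0`, `H ⪰ 0`, `R ≻ 0` is positive semidefinite on `[0,T]`. -/
theorem riccati_solution_is_posSemidef
    (n m : ℕ) (T : ℝ) (hT : 0 ≤ T)
    (A : Matrix (Fin n) (Fin n) ℝ) (B : Matrix (Fin n) (Fin m) ℝ)
    (Q H : Matrix (Fin n) (Fin n) ℝ) (R : Matrix (Fin m) (Fin m) ℝ)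
    (hQ : Q.PosSemidef) (hH : H.PosSemidef) (hR : R.PosDef)
    (P P' : ℝ → Matrix (Fin n) (Fin n) ℝ)
    (hsymm : ∀ t ∈ Icc (0 : ℝ) T, (P t).IsSymm)
    (hderiv : ∀ t ∈ Icc (0 : ℝ) T, ∀ i j, HasDerivAt (fun s => P s i j) (P' t i j) t)
    (hcont : ∀ i j, ContinuousOn (fun t => P' t i j) (Icc (0 : ℝ) T))
    (hric : ∀ t ∈ Icc (0 : ℝ) T,
      P' t + P t * A + Aᵀ * P t + Q - P t * B * R⁻¹ * Bᵀ * P t = 0)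
    (hfin : P T = H) :
    ∀ t ∈ Icc (0 : ℝ) T, (P t).PosSemidef := by
  rcases Nat.eq_zero_or_pos n with hn0 | hn
  · subst hn0
    intro t ht
    refine Matrix.PosSemidef.of_dotProduct_mulVec_nonneg ?_ fun x => ?_
    · ext i j; exact i.elim0
    · simp [dotProduct]
  -- main case `0 < n`
  have hherm : ∀ t ∈ Icc (0 : ℝ) T, (P t).IsHermitian := by
    intro t ht
    rw [Matrix.IsHermitian, Matrix.conjTranspose_eq_transpose_of_trivial]
    exact hsymm t ht
  -- choose a unit minimizer of the quadratic form for every time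
  choose V hV1 hV2 using fun t => riccati_exists_min hn (P t)
  set g : ℝ → ℝ := fun t => (V t : Fin n → ℝ) ⬝ᵥ P t *ᵥ V t with hgdef
  -- continuity of `g` on `[0, T]`
  have hPcont : ∀ i j, ContinuousOn (fun s => P s i j) (Icc (0 : ℝ) T) := by
    intro i j s hs
    exact (hderiv s hs i j).continuousAt.continuousWithinAt
  have hgsub : ∀ s t : ℝ, g s - g t ≤ ∑ i, ∑ j, |P s i j - P t i j| := by
    intro s t
    have h1 : g s ≤ (V t : Fin n → ℝ) ⬝ᵥ P s *ᵥ V t := hV2 s (V t) (hV1 t)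
    have h2 : (V t : Fin n → ℝ) ⬝ᵥ P s *ᵥ V t - g t
        = (V t : Fin n → ℝ) ⬝ᵥ (P s - P t) *ᵥ V t := by
      rw [Matrix.sub_mulVec, dotProduct_sub]
    have h3 := riccati_quad_abs_le n (P s - P t) (V t) (hV1 t)
    have h4 : (V t : Fin n → ℝ) ⬝ᵥ (P s - P t) *ᵥ V t ≤ ∑ i, ∑ j, |P s i j - P t i j| := by
      have := le_abs_self ((V t : Fin n → ℝ) ⬝ᵥ (P s - P t) *ᵥ V t)
      calc (V t : Fin n → ℝ) ⬝ᵥ (P s - P t) *ᵥ V t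
          ≤ |(V t : Fin n → ℝ) ⬝ᵥ (P s - P t) *ᵥ V t| := this
        _ ≤ ∑ i, ∑ j, |(P s - P t) i j| := h3
        _ = ∑ i, ∑ j, |P s i j - P t i j| := by simp [Matrix.sub_apply]
    linarith
  have hgabs : ∀ s t : ℝ, |g s - g t| ≤ ∑ i, ∑ j, |P s i j - P t i j| := by
    intro s t
    rw [abs_sub_le_iff]
    constructor
    · exact hgsub s t
    · have := hgsub t s
      have e : ∑ i, ∑ j, |P t i j - P s i j| = ∑ i, ∑ j, |P s i j - P t i j| := by
        apply Finset.sum_congr rfl; intro i _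
        apply Finset.sum_congr rfl; intro j _
        exact abs_sub_comm _ _
      linarith
  have hgcont : ContinuousOn g (Icc (0 : ℝ) T) := by
    intro t ht
    have hc0 : Filter.Tendsto (fun s => ∑ i, ∑ j, |P s i j - P t i j|)
        (nhdsWithin t (Icc (0 : ℝ) T)) (nhds 0) := by
      have hc' : Filter.Tendsto (fun s => ∑ i, ∑ j, |P s i j - P t i j|)
          (nhdsWithin t (Icc (0 : ℝ) T)) (nhds (∑ i, ∑ j, |P t i j - P t i j|)) := by
        apply tendsto_finset_sum
        intro i _
        apply tendsto_finset_sum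
        intro j _
        exact ((hPcont i j t ht).sub continuousWithinAt_const).abs
      simpa using hc'
    show Filter.Tendsto g (nhdsWithin t (Icc (0 : ℝ) T)) (nhds (g t))
    rw [tendsto_iff_dist_tendsto_zero]
    exact squeeze_zero (fun s => dist_nonneg)
      (fun s => by rw [Real.dist_eq]; exact hgabs s t) hc0
  -- the claim `0 ≤ g t₀` for all `t₀ ∈ [0, T]`
  have hg0 : ∀ t₀ ∈ Icc (0 : ℝ) T, 0 ≤ g t₀ := by
    intro t₀ ht₀
    by_contra hneg
    push_neg at hneg
    -- bound on |g| and entry sums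
    obtain ⟨M₀, hM₀⟩ := isCompact_Icc.exists_bound_of_continuousOn hgcont
    have hM₀0 : 0 ≤ M₀ := le_trans (norm_nonneg _) (hM₀ t₀ ht₀)
    set CA : ℝ := ∑ i, ∑ j, |A i j| with hCA
    set CS : ℝ := ∑ i, ∑ j, |(B * R⁻¹ * Bᵀ) i j| with hCS
    have hCA0 : 0 ≤ CA := Finset.sum_nonneg fun i _ => Finset.sum_nonneg fun j _ => abs_nonneg _
    have hCS0 : 0 ≤ CS := Finset.sum_nonneg fun i _ => Finset.sum_nonneg fun j _ => abs_nonneg _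
    set K : ℝ := M₀ * CS + 2 * CA with hK
    have hK0 : 0 ≤ K := by positivity
    set Bf : ℝ → ℝ := fun t => g t₀ * Real.exp (-(K + 1) * (t - t₀)) with hBf
    have hBneg : ∀ x, Bf x < 0 := fun x => mul_neg_of_neg_of_pos hneg (Real.exp_pos _)
    have hBderiv : ∀ x, HasDerivAt Bf (-(K + 1) * Bf x) x := by
      intro x
      have h1 : HasDerivAt (fun t : ℝ => -(K + 1) * (t - t₀)) (-(K + 1)) x := by
        simpa using ((hasDerivAt_id x).sub_const t₀).const_mul (-(K + 1))
      have h2 := (h1.exp).const_mul (g t₀)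
      refine h2.congr_deriv ?_
      simp only [hBf]; ring
    -- apply the fencing lemma on [t₀, T]
    have main : ∀ ⦃x⦄, x ∈ Icc t₀ T → g x ≤ Bf x := by
      refine image_le_of_liminf_slope_right_lt_deriv_boundary
        (f' := fun x => (V x : Fin n → ℝ) ⬝ᵥ P' x *ᵥ V x) (B' := fun x => -(K + 1) * Bf x)
        ?_ ?_ ?_ ?_ ?_
      · exact hgcont.mono (Icc_subset_Icc ht₀.1 le_rfl)
      · -- liminf slope condition
        intro x hx r hr
        have hxI : x ∈ Icc (0 : ℝ) T := ⟨le_trans ht₀.1 hx.1, hx.2.le⟩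
        have hd : HasDerivAt (fun s => (V x : Fin n → ℝ) ⬝ᵥ P s *ᵥ V x)
            ((V x : Fin n → ℝ) ⬝ᵥ P' x *ᵥ V x) x :=
          riccati_quad_deriv (hderiv x hxI) _
        have hslope : Filter.Tendsto (slope (fun s => (V x : Fin n → ℝ) ⬝ᵥ P s *ᵥ V x) x)
            (nhdsWithin x (Ioi x)) (nhds ((V x : Fin n → ℝ) ⬝ᵥ P' x *ᵥ V x)) :=
          (hasDerivAt_iff_tendsto_slope.mp hd).mono_left
            (nhdsWithin_mono x fun z hz => ne_of_gt hz)
        have h1 : ∀ᶠ z in nhdsWithin x (Ioi x),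
            slope (fun s => (V x : Fin n → ℝ) ⬝ᵥ P s *ᵥ V x) x z < r :=
          Filter.Tendsto.eventually_lt_const hr hslope
        have h2 : ∀ᶠ z in nhdsWithin x (Ioi x), x < z :=
          eventually_mem_nhdsWithin
        apply ((h1.and h2).mono ?_).frequently
        rintro z ⟨hz1, hz2⟩
        have hz2' : x < z := hz2
        have hgle : g z ≤ (V x : Fin n → ℝ) ⬝ᵥ P z *ᵥ V x := hV2 z (V x) (hV1 x)
        have hgx : g x = (V x : Fin n → ℝ) ⬝ᵥ P x *ᵥ V x := rfl
        rw [slope_def_field] at hz1 ⊢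
        have hzx : 0 < z - x := by linarith [hz2']
        calc (g z - g x) / (z - x)
            ≤ ((V x : Fin n → ℝ) ⬝ᵥ P z *ᵥ V x - (V x : Fin n → ℝ) ⬝ᵥ P x *ᵥ V x) / (z - x) := by
              have hnum : g z - g x
                  ≤ (V x : Fin n → ℝ) ⬝ᵥ P z *ᵥ V x - (V x : Fin n → ℝ) ⬝ᵥ P x *ᵥ V x := by
                rw [hgx] at *; linarith
              exact (div_le_div_iff_of_pos_right hzx).mpr hnum
          _ < r := hz1
      · -- initial point
        simp [hBf]
      · exact hBderiv
      · -- boundary strict inequality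
        intro x hx hgB
        have hxI : x ∈ Icc (0 : ℝ) T := ⟨le_trans ht₀.1 hx.1, hx.2.le⟩
        have hgneg : g x < 0 := by rw [hgB]; exact hBneg x
        have heig : P x *ᵥ (V x : Fin n → ℝ) = g x • (V x : Fin n → ℝ) :=
          riccati_min_eig (P x) (hsymm x hxI) (V x) (hV1 x) (hV2 x)
        obtain ⟨e1, e2, e3⟩ := riccati_eig_quad (hsymm x hxI) heig
          (A := A) (B := B) (Rinv := R⁻¹)
        have hP' : P' x = P x * B * R⁻¹ * Bᵀ * P x - P x * A - Aᵀ * P x - Q := by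
          rw [← sub_eq_zero]
          calc P' x - (P x * B * R⁻¹ * Bᵀ * P x - P x * A - Aᵀ * P x - Q)
              = P' x + P x * A + Aᵀ * P x + Q - P x * B * R⁻¹ * Bᵀ * P x := by abel
            _ = 0 := hric x hxI
        have hfeq : (V x : Fin n → ℝ) ⬝ᵥ P' x *ᵥ V x
            = g x ^ 2 * ((V x : Fin n → ℝ) ⬝ᵥ (B * R⁻¹ * Bᵀ) *ᵥ V x)
              - 2 * g x * ((V x : Fin n → ℝ) ⬝ᵥ A *ᵥ V x)
              - (V x : Fin n → ℝ) ⬝ᵥ Q *ᵥ V x := by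
          rw [hP']
          rw [Matrix.sub_mulVec, Matrix.sub_mulVec, Matrix.sub_mulVec,
            dotProduct_sub, dotProduct_sub, dotProduct_sub, e1, e2, e3]
          ring
        -- bounds
        have hqS0 : 0 ≤ (V x : Fin n → ℝ) ⬝ᵥ (B * R⁻¹ * Bᵀ) *ᵥ V x :=
          riccati_S_nonneg B R hR _
        have hqSle : (V x : Fin n → ℝ) ⬝ᵥ (B * R⁻¹ * Bᵀ) *ᵥ V x ≤ CS :=
          le_trans (le_abs_self _) (riccati_quad_abs_le n _ (V x) (hV1 x))
        have hqAle : |(V x : Fin n → ℝ) ⬝ᵥ A *ᵥ V x| ≤ CA :=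
          riccati_quad_abs_le n _ (V x) (hV1 x)
        have hqQ0 : 0 ≤ (V x : Fin n → ℝ) ⬝ᵥ Q *ᵥ V x := by
          have := hQ.dotProduct_mulVec_nonneg (V x : Fin n → ℝ)
          simpa [star_trivial] using this
        have hgM : -g x ≤ M₀ := by
          have h := hM₀ x hxI
          rw [Real.norm_eq_abs] at h
          obtain ⟨h1, h2⟩ := abs_le.mp h
          linarith
        -- combine
        have hkey : (V x : Fin n → ℝ) ⬝ᵥ P' x *ᵥ V x ≤ (-g x) * K := by
          rw [hfeq, hK]
          have hA' : -(2 * g x * ((V x : Fin n → ℝ) ⬝ᵥ A *ᵥ V x)) ≤ 2 * (-g x) * CA := by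
            have h1 : (V x : Fin n → ℝ) ⬝ᵥ A *ᵥ V x ≤ CA := le_trans (le_abs_self _) hqAle
            have h2 : -CA ≤ (V x : Fin n → ℝ) ⬝ᵥ A *ᵥ V x := by
              have := neg_abs_le ((V x : Fin n → ℝ) ⬝ᵥ A *ᵥ V x); linarith
            nlinarith [hgneg]
          have hS' : g x ^ 2 * ((V x : Fin n → ℝ) ⬝ᵥ (B * R⁻¹ * Bᵀ) *ᵥ V x)
              ≤ (-g x) * (M₀ * CS) := by
            have h1 : g x ^ 2 * ((V x : Fin n → ℝ) ⬝ᵥ (B * R⁻¹ * Bᵀ) *ᵥ V x)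
                ≤ g x ^ 2 * CS := by nlinarith [sq_nonneg (g x)]
            have h2 : g x ^ 2 ≤ (-g x) * M₀ := by nlinarith [hgneg, hgM]
            nlinarith [hCS0]
          nlinarith
        have hfinal : (-g x) * K < -(K + 1) * Bf x := by
          rw [← hgB]
          have : -(K + 1) * g x = (-g x) * (K + 1) := by ring
          rw [this]
          have hpos : 0 < -g x := by linarith
          nlinarith
        exact lt_of_le_of_lt hkey hfinal
    -- contradiction at T
    have hgT : 0 ≤ g T := by
      have := hH.dotProduct_mulVec_nonneg (V T : Fin n → ℝ)
      simp only [star_trivial] at this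
      rw [hgdef]
      simp only [hfin]
      exact this
    have := main (right_mem_Icc.mpr ht₀.2)
    have := hBneg T
    linarith
  -- conclude positive semidefiniteness
  intro t₀ ht₀
  refine Matrix.PosSemidef.of_dotProduct_mulVec_nonneg (hherm t₀ ht₀) fun x => ?_
  rw [star_trivial]
  by_cases hx : x = 0
  · simp [hx]
  · set x' : EuclideanSpace ℝ (Fin n) := (WithLp.equiv 2 (Fin n → ℝ)).symm x with hx'
    have hx'0 : x' ≠ 0 := by
      simp only [hx', ne_eq, EmbeddingLike.map_eq_zero_iff]
      exact fun h => hx (by simpa using congrArg (WithLp.equiv 2 (Fin n → ℝ)) h)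
    have hc : 0 < ‖x'‖ := norm_pos_iff.mpr hx'0
    set c : ℝ := ‖x'‖ with hcdef
    set w : EuclideanSpace ℝ (Fin n) := c⁻¹ • x' with hw
    have hw1 : ‖w‖ = 1 := by
      rw [hw, norm_smul, norm_inv, Real.norm_eq_abs, abs_of_pos hc, ← hcdef]
      field_simp
    have hq := le_trans (hg0 t₀ ht₀) (hV2 t₀ w hw1)
    have hwx : (w : Fin n → ℝ) = c⁻¹ • x := rfl
    rw [hwx, smul_dotProduct, Matrix.mulVec_smul, dotProduct_smul,
      smul_eq_mul, smul_eq_mul] at hq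
    have hc2 : 0 < c⁻¹ * (c⁻¹) := by positivity
    nlinarith [hq, hc2]
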